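/- For every n ∈ ℕ, the number of pairs (σ, θ) ∈ NCP(2n)² with σ ∨ θ = 1_{2n} (join in NC(2n)) equals the number of irreducible meandric systems on 2n bridges, i.e., equals |{(π,ρ) ∈ NC(n)² : π ∨ ρ = 1_n and π ∧ ρ = 0_n}|. -/

import Mathlib

open scoped Classical

/-- A setoid (partition) of `Fin n` is non-crossing if there is no crossing
`a < b < c < d` with `a ∼ c`, `b ∼ d` but `a` and `b` in distinct blocks. -/
def IsNC {n : ℕ} (S : Setoid (Fin n)) : Prop :=
  ∀ a b c d : Fin n, a < b → b < c → c < d → S.r a c → S.r b d → S.r a b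

/-- A partition is a pairing if every block has exactly two elements. -/
def IsPairing {m : ℕ} (T : Setoid (Fin m)) : Prop :=
  ∀ x : Fin m, ∃ y : Fin m, y ≠ x ∧ T.r x y ∧ ∀ z : Fin m, T.r x z → z = x ∨ z = y

/-- The block of `i` in the partition `S`, as a finset. -/
noncomputable def blockOf {n : ℕ} (S : Setoid (Fin n)) (i : Fin n) : Finset (Fin n) :=
  Finset.univ.filter (fun j => S.r i j)

lemma blockOf_nonempty {n : ℕ} (S : Setoid (Fin n)) (i : Fin n) :
    (blockOf S i).Nonempty :=
  ⟨i, by simp [blockOf, S.iseqv.refl i]⟩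

/-- The permutation `P_S` which performs an increasing cycle on every block of `S`:
it sends `i` to the next larger element of its block, or to the minimum of the
block if `i` is the largest element of its block. -/
noncomputable def nextP {n : ℕ} (S : Setoid (Fin n)) (i : Fin n) : Fin n :=
  if h : ((blockOf S i).filter (fun j => i < j)).Nonempty
  then ((blockOf S i).filter (fun j => i < j)).min' h
  else (blockOf S i).min' (blockOf_nonempty S i)

/-- The inverse permutation `P_S⁻¹` (decreasing cycle on every block of `S`). -/
noncomputable def prevP {n : ℕ} (S : Setoid (Fin n)) (i : Fin n) : Fin n :=
  if h : ((blockOf S i).filter (fun j => j < i)).Nonempty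
  then ((blockOf S i).filter (fun j => j < i)).max' h
  else (blockOf S i).max' (blockOf_nonempty S i)

/-- `0`-indexed version of the point `2i-1` of `{1,…,2n}`. -/
def dEven {n : ℕ} (j : Fin n) : Fin (2*n) := ⟨2*j.val, by have := j.isLt; omega⟩

/-- `0`-indexed version of the point `2i` of `{1,…,2n}`. -/
def dOdd {n : ℕ} (j : Fin n) : Fin (2*n) := ⟨2*j.val+1, by have := j.isLt; omega⟩

/-- The doubling construction `π ↦ A(π)`: the pairing of `{1,…,2n}` generated by
pairing each point `2i` with `2P_π(i) - 1`, so that the associated permutation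
satisfies `P_{A(π)}(2i) = 2P_π(i) - 1` and `P_{A(π)}(2i-1) = 2P_π⁻¹(i)`. -/
noncomputable def archSetoid {n : ℕ} (S : Setoid (Fin n)) : Setoid (Fin (2*n)) :=
  Relation.EqvGen.setoid (fun a b => ∃ j : Fin n, a = dOdd j ∧ b = dEven (nextP S j))

/-- The meandric system permutation `M_{π,ρ} ∈ S_{2n}`, defined by
`M_{π,ρ}(2i-1) = 2P_π⁻¹(i)` and `M_{π,ρ}(2i) = 2P_ρ(i) - 1` (here `0`-indexed). -/
noncomputable def meanderMap {n : ℕ} (π ρ : Setoid (Fin n)) (x : Fin (2*n)) : Fin (2*n) :=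
  if x.val % 2 = 0
  then dOdd (prevP π ⟨x.val / 2, by have := x.isLt; omega⟩)
  else dEven (nextP ρ ⟨x.val / 2, by have := x.isLt; omega⟩)

/-- The orbit partition of a map. -/
def orbitSetoid {m : ℕ} (f : Fin m → Fin m) : Setoid (Fin m) :=
  Relation.EqvGen.setoid (fun a b => f a = b)

/-- Number of orbits of a map. -/
noncomputable def numOrbits {m : ℕ} (f : Fin m → Fin m) : ℕ :=
  Nat.card (Quotient (orbitSetoid f))

/-- `S` is a union of blocks of the partition `T`. -/
def IsBlockUnion {m : ℕ} (T : Setoid (Fin m)) (S : Set (Fin m)) : Prop :=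
  ∀ x ∈ S, ∀ y, T.r x y → y ∈ S

/-- `S` is invariant under `f`. -/
def MInvariant {m : ℕ} (f : Fin m → Fin m) (S : Set (Fin m)) : Prop :=
  ∀ x ∈ S, f x ∈ S

/-- The meandric system `M_{π,ρ}` is reducible: some proper subinterval
`{a,…,b}` of `{1,…,2n}` is invariant under `M_{π,ρ}`. -/
noncomputable def Reducible {n : ℕ} (π ρ : Setoid (Fin n)) : Prop :=
  ∃ a b : Fin (2*n), a ≤ b ∧ b.val - a.val < 2*n - 1 ∧
    MInvariant (meanderMap π ρ) {x | a ≤ x ∧ x ≤ b}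

/-- The join in the lattice of non-crossing partitions: the smallest
non-crossing partition above both `π` and `ρ`. -/
noncomputable def ncJoin {m : ℕ} (π ρ : Setoid (Fin m)) : Setoid (Fin m) :=
  sInf {τ | IsNC τ ∧ π ≤ τ ∧ ρ ≤ τ}

/-- The moment-cumulant formula of free probability: `mom n` is the sum over all
non-crossing partitions of `{1,…,n}` of the products of cumulants `κ` indexed
by the block sizes.  This uniquely determines the free cumulants `κ n`, `n ≥ 1`,
of a sequence of moments. -/
def MomCum {F : Type*} [Field F] (mom κ : ℕ → F) : Prop :=
  ∀ n : ℕ, 0 < n →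
    mom n = ∑ᶠ S ∈ {S : Setoid (Fin n) | IsNC S}, ∏ᶠ B ∈ Setoid.classes S, κ B.ncard

/-- The number of irreducible meandric systems on `2k` bridges, described as the
number of pairs `(π,ρ) ∈ NC(k)²` with `π ∨ ρ = 1_k`, `π ∧ ρ = 0_k`. -/
noncomputable def mirr (k : ℕ) : ℕ :=
  Nat.card {pr : Setoid (Fin k) × Setoid (Fin k) //
    IsNC pr.1 ∧ IsNC pr.2 ∧ ncJoin pr.1 pr.2 = ⊤ ∧ pr.1 ⊓ pr.2 = ⊥}

/-- The number of pairs `(π,ρ) ∈ NC(n)²` whose meandric system `M_{π,ρ}` has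
exactly `k` orbits (connected components). -/
noncomputable def mcount (n k : ℕ) : ℕ :=
  Nat.card {pr : Setoid (Fin n) × Setoid (Fin n) //
    IsNC pr.1 ∧ IsNC pr.2 ∧ numOrbits (meanderMap pr.1 pr.2) = k}

/-- The number of meanders on `2n` bridges. -/
noncomputable def meanderNum (n : ℕ) : ℕ := mcount n 1


section AuxProof

section basics
variable {n : ℕ} (S : Setoid (Fin n))

@[simp] lemma mem_blockOf {i j : Fin n} : j ∈ blockOf S i ↔ S.r i j := by
  simp [blockOf]

lemma blockOf_eq_of_r {i j : Fin n} (h : S.r i j) : blockOf S i = blockOf S j := by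
  ext k; simp only [mem_blockOf]
  exact ⟨fun h' => S.iseqv.trans (S.iseqv.symm h) h', fun h' => S.iseqv.trans h h'⟩

/-- specification of `nextP`. -/
lemma nextP_spec (i : Fin n) :
    S.r i (nextP S i) ∧
      ((i < nextP S i ∧ ∀ l, S.r i l → i < l → nextP S i ≤ l) ∨
       ((∀ l, S.r i l → l ≤ i) ∧ (∀ l, S.r i l → nextP S i ≤ l))) := by
  unfold nextP
  split_ifs with h
  · have hm := Finset.min'_mem _ h
    simp only [Finset.mem_filter, mem_blockOf] at hm
    refine ⟨hm.1, Or.inl ⟨hm.2, fun l hl hil => Finset.min'_le _ _ ?_⟩⟩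
    simp only [Finset.mem_filter, mem_blockOf]; exact ⟨hl, hil⟩
  · have hm := Finset.min'_mem _ (blockOf_nonempty S i)
    simp only [mem_blockOf] at hm
    refine ⟨hm, Or.inr ⟨fun l hl => ?_, fun l hl => Finset.min'_le _ _ (by simpa using hl)⟩⟩
    by_contra hc
    exact h ⟨l, by simp only [Finset.mem_filter, mem_blockOf]; exact ⟨hl, lt_of_not_ge hc⟩⟩

lemma prevP_spec (i : Fin n) :
    S.r i (prevP S i) ∧
      ((prevP S i < i ∧ ∀ l, S.r i l → l < i → l ≤ prevP S i) ∨
       ((∀ l, S.r i l → i ≤ l) ∧ (∀ l, S.r i l → l ≤ prevP S i))) := by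
  unfold prevP
  split_ifs with h
  · have hm := Finset.max'_mem _ h
    simp only [Finset.mem_filter, mem_blockOf] at hm
    refine ⟨hm.1, Or.inl ⟨hm.2, fun l hl hil => Finset.le_max' _ _ ?_⟩⟩
    simp only [Finset.mem_filter, mem_blockOf]; exact ⟨hl, hil⟩
  · have hm := Finset.max'_mem _ (blockOf_nonempty S i)
    simp only [mem_blockOf] at hm
    refine ⟨hm, Or.inr ⟨fun l hl => ?_, fun l hl => Finset.le_max' _ _ (by simpa using hl)⟩⟩
    by_contra hc
    exact h ⟨l, by simp only [Finset.mem_filter, mem_blockOf]; exact ⟨hl, lt_of_not_ge hc⟩⟩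

lemma nextP_r (i : Fin n) : S.r i (nextP S i) := (nextP_spec S i).1
lemma prevP_r (i : Fin n) : S.r i (prevP S i) := (prevP_spec S i).1

lemma prevP_nextP (i : Fin n) : prevP S (nextP S i) = i := by
  obtain ⟨hr, hcase⟩ := nextP_spec S i
  set k := nextP S i with hk
  obtain ⟨hrk, hcasek⟩ := prevP_spec S k
  have hik : S.r k i := S.iseqv.symm hr
  rcases hcase with ⟨hik2, hmin⟩ | ⟨hmax, hmin⟩
  · -- forward: k = min of elements > i; so prevP k = i
    rcases hcasek with ⟨hlt, hmax'⟩ | ⟨hge, _⟩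
    · -- prevP k is the max elt of block < k; i is such
      have h1 : i ≤ prevP S k := hmax' i hik hik2
      have h2 : S.r i (prevP S k) := S.iseqv.trans hr hrk
      rcases lt_or_eq_of_le h1 with h1' | h1'
      · exact absurd (hmin _ h2 h1') (not_le.mpr hlt)
      · exact h1'.symm
    · exact absurd (hge i hik) (not_le.mpr hik2)
  · -- backward: i = max of block, k = min of block
    rcases hcasek with ⟨hlt, hmax'⟩ | ⟨hge, hle⟩
    · -- prevP k = max of elements of block < k. but k = min of block: contradiction
      have := hmin (prevP S k) (S.iseqv.trans hr hrk)
      exact absurd this (not_le.mpr hlt)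
    · -- k is min of block: so every elt ≥ k; prevP k = max of block = i
      have h1 : i ≤ prevP S k := hle i hik
      have h2 : prevP S k ≤ i := hmax _ (S.iseqv.trans hr hrk)
      exact le_antisymm h2 h1

lemma nextP_prevP (i : Fin n) : nextP S (prevP S i) = i := by
  obtain ⟨hr, hcase⟩ := prevP_spec S i
  set k := prevP S i with hk
  obtain ⟨hrk, hcasek⟩ := nextP_spec S k
  have hik : S.r k i := S.iseqv.symm hr
  rcases hcase with ⟨hik2, hmax⟩ | ⟨hmin, hle⟩
  · rcases hcasek with ⟨hlt, hmin'⟩ | ⟨hmax', _⟩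
    · have h1 : nextP S k ≤ i := hmin' i hik hik2
      have h2 : S.r i (nextP S k) := S.iseqv.trans hr hrk
      rcases lt_or_eq_of_le h1 with h1' | h1'
      · exact absurd (hmax _ h2 h1') (not_le.mpr hlt)
      · exact h1'
    · exact absurd (hmax' i hik) (not_le.mpr hik2)
  · rcases hcasek with ⟨hlt, hmin'⟩ | ⟨hmax', hge⟩
    · have h3 : nextP S k ≤ k := hle (nextP S k) (S.iseqv.trans hr hrk)
      exact absurd h3 (not_le.mpr hlt)
    · have h1 : nextP S k ≤ i := hge i hik
      have h2 : i ≤ nextP S k := hmin _ (S.iseqv.trans hr hrk)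
      exact le_antisymm h1 h2

lemma nextP_injective : Function.Injective (nextP S) := by
  intro a b h
  have := congrArg (prevP S) h
  rwa [prevP_nextP, prevP_nextP] at this

end basics

section orbits
variable {n : ℕ} (S : Setoid (Fin n))

/-- the largest element of the block of `x`. -/
noncomputable def maxB (x : Fin n) : Fin n := (blockOf S x).max' (blockOf_nonempty S x)

lemma le_maxB {x y : Fin n} (h : S.r x y) : y ≤ maxB S x :=
  Finset.le_max' _ _ ((mem_blockOf S).2 h)

lemma maxB_r (x : Fin n) : S.r x (maxB S x) :=
  (mem_blockOf S).1 (Finset.max'_mem _ _)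

lemma maxB_eq_of_r {x y : Fin n} (h : S.r x y) : maxB S x = maxB S y := by
  unfold maxB; congr 1; exact blockOf_eq_of_r S h

lemma eqvGen_nextP_reach_max (x : Fin n) :
    Relation.EqvGen (fun a b => nextP S a = b) x (maxB S x) := by
  set d := (maxB S x).val - x.val with hd
  clear_value d
  induction d using Nat.strong_induction_on generalizing x with
  | _ d ih =>
    rcases eq_or_lt_of_le (le_maxB S (S.iseqv.refl x)) with he | hlt
    · rw [← he]; exact Relation.EqvGen.refl x
    · obtain ⟨hr, hcase⟩ := nextP_spec S x
      have hfwd : x < nextP S x := by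
        rcases hcase with ⟨h1, _⟩ | ⟨h1, _⟩
        · exact h1
        · exact absurd (h1 _ (maxB_r S x)) (not_le.mpr hlt)
      have hmaxeq : maxB S (nextP S x) = maxB S x := (maxB_eq_of_r S hr).symm
      have hle : nextP S x ≤ maxB S x := le_maxB S hr
      have step : Relation.EqvGen (fun a b => nextP S a = b) x (nextP S x) :=
        Relation.EqvGen.rel _ _ rfl
      have ihh := ih ((maxB S (nextP S x)).val - (nextP S x).val)
        (by rw [hmaxeq, hd]; omega) (nextP S x) rfl
      rw [hmaxeq] at ihh
      exact Relation.EqvGen.trans _ _ _ step ihh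

lemma eqvGen_nextP_iff {x y : Fin n} :
    Relation.EqvGen (fun a b => nextP S a = b) x y ↔ S.r x y := by
  constructor
  · intro h
    induction h with
    | rel a b hab => exact hab ▸ nextP_r S a
    | refl a => exact S.iseqv.refl a
    | symm a b _ ih => exact S.iseqv.symm ih
    | trans a b c _ _ ih1 ih2 => exact S.iseqv.trans ih1 ih2
  · intro h
    have h1 := eqvGen_nextP_reach_max S x
    have h2 := eqvGen_nextP_reach_max S y
    rw [maxB_eq_of_r S h] at h1
    exact Relation.EqvGen.trans _ _ _ h1 (Relation.EqvGen.symm _ _ h2)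

/-- A set invariant (in the iff sense) under `nextP` is a union of blocks. -/
lemma isBlockUnion_of_invariant {A : Set (Fin n)} (h : ∀ j, j ∈ A ↔ nextP S j ∈ A) :
    IsBlockUnion S A := by
  intro x hx y hxy
  have horb := (eqvGen_nextP_iff S).2 hxy
  have key : ∀ a b : Fin n, Relation.EqvGen (fun a b => nextP S a = b) a b →
      (a ∈ A ↔ b ∈ A) := by
    intro a b hab
    induction hab with
    | rel a b hab => exact hab ▸ h a
    | refl a => exact Iff.rfl
    | symm a b _ ih => exact ih.symm
    | trans a b c _ _ ih1 ih2 => exact ih1.trans ih2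
  exact (key x y horb).1 hx

lemma isBlockUnion_invariant {A : Set (Fin n)} (h : IsBlockUnion S A) (j : Fin n)
    (hj : j ∈ A) : nextP S j ∈ A := h j hj _ (nextP_r S j)

end orbits

section joinchar
variable {m : ℕ}

lemma ncJoin_mem_top (π ρ : Setoid (Fin m)) : (⊤ : Setoid (Fin m)) ∈ {τ | IsNC τ ∧ π ≤ τ ∧ ρ ≤ τ} :=
  ⟨fun _ _ _ _ _ _ _ _ _ => trivial, le_top, le_top⟩

lemma ncJoin_isNC (π ρ : Setoid (Fin m)) : IsNC (ncJoin π ρ) := by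
  intro a b c d h1 h2 h3 hac hbd
  intro τ hτ
  exact hτ.1 a b c d h1 h2 h3 (hac τ hτ) (hbd τ hτ)

lemma left_le_ncJoin (π ρ : Setoid (Fin m)) : π ≤ ncJoin π ρ := by
  intro x y h τ hτ; exact hτ.2.1 h

lemma right_le_ncJoin (π ρ : Setoid (Fin m)) : ρ ≤ ncJoin π ρ := by
  intro x y h τ hτ; exact hτ.2.2 h

lemma ncJoin_le {π ρ τ : Setoid (Fin m)} (h : IsNC τ) (h1 : π ≤ τ) (h2 : ρ ≤ τ) :
    ncJoin π ρ ≤ τ := by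
  intro x y hxy; exact hxy τ ⟨h, h1, h2⟩

/-- Characterization: the noncrossing join is not `⊤` iff there is a proper
nonempty interval which is a union of blocks of both partitions. -/
lemma ncJoin_ne_top_iff (π ρ : Setoid (Fin m)) :
    ncJoin π ρ ≠ ⊤ ↔ ∃ a b : Fin m, a ≤ b ∧ ¬(a.val = 0 ∧ b.val = m - 1) ∧
      IsBlockUnion π (Set.Icc a b) ∧ IsBlockUnion ρ (Set.Icc a b) := by
  constructor
  · intro hne
    set J := ncJoin π ρ with hJ
    have hNC : IsNC J := ncJoin_isNC π ρ
    have hex : ∃ u v : Fin m, ¬ J.r u v := by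
      by_contra hc
      push_neg at hc
      exact hne (Setoid.eq_top_iff.2 hc)
    obtain ⟨u, v, huv⟩ := hex
    have hne' : (Finset.univ : Finset (Fin m)).Nonempty := ⟨u, Finset.mem_univ u⟩
    obtain ⟨i₀, -, hmin⟩ := Finset.exists_min_image Finset.univ
      (fun i => (maxB J i).val - ((blockOf J i).min' (blockOf_nonempty J i)).val) hne'
    set a := (blockOf J i₀).min' (blockOf_nonempty J i₀) with ha
    set b := maxB J i₀ with hb
    have har : J.r i₀ a := (mem_blockOf J).1 (Finset.min'_mem _ _)
    have hbr : J.r i₀ b := maxB_r J i₀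
    have hab : a ≤ b := Finset.min'_le _ _ ((mem_blockOf J).2 hbr)
    have hblocksub : ∀ y, J.r i₀ y → y ∈ Set.Icc a b := by
      intro y hy
      exact ⟨Finset.min'_le _ _ ((mem_blockOf J).2 hy), le_maxB J hy⟩
    have hicc : ∀ x, x ∈ Set.Icc a b → J.r i₀ x := by
      by_contra hc
      push_neg at hc
      obtain ⟨x, hx, hxr⟩ := hc
      have hxa : a < x := lt_of_le_of_ne hx.1 (fun he => hxr (he ▸ har))
      have hxb : x < b := lt_of_le_of_ne hx.2 (fun he => hxr (he ▸ hbr))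
      -- the block of x is contained in the open interval (a,b)
      have hCsub : ∀ l, J.r x l → a < l ∧ l < b := by
        intro l hl
        constructor
        · rcases lt_trichotomy l a with h' | h' | h'
          · exfalso
            have hla := hNC l a x b h' hxa hxb (J.iseqv.symm hl) (J.iseqv.trans (J.iseqv.symm har) hbr)
            exact hxr (J.iseqv.trans har (J.iseqv.trans (J.iseqv.symm hla) (J.iseqv.symm hl)))
          · exact (hxr (J.iseqv.trans har (h' ▸ J.iseqv.symm hl))).elim
          · exact h'
        · rcases lt_trichotomy l b with h' | h' | h'
          · exact h'
          · exact (hxr (J.iseqv.trans hbr (h' ▸ J.iseqv.symm hl))).elim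
          · exfalso
            have := hNC a x b l hxa hxb h' (J.iseqv.trans (J.iseqv.symm har) hbr) hl
            exact hxr (J.iseqv.trans har this)
      -- so the span of x's block is strictly smaller, contradiction with minimality
      have h1 : a < (blockOf J x).min' (blockOf_nonempty J x) :=
        (hCsub _ ((mem_blockOf J).1 (Finset.min'_mem _ _))).1
      have h2 : maxB J x < b := (hCsub _ (maxB_r J x)).2
      have h3 : ((blockOf J x).min' (blockOf_nonempty J x)) ≤ maxB J x :=
        Finset.min'_le _ _ ((mem_blockOf J).2 (maxB_r J x))
      have hm := hmin x (Finset.mem_univ x)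
      have hm : b.val - a.val ≤ (maxB J x).val - ((blockOf J x).min' (blockOf_nonempty J x)).val := hm
      have e1 : a.val < ((blockOf J x).min' (blockOf_nonempty J x)).val := h1
      have e2 : (maxB J x).val < b.val := h2
      have e3 : ((blockOf J x).min' (blockOf_nonempty J x)).val ≤ (maxB J x).val := h3
      have e4 : a.val ≤ b.val := hab
      omega
    refine ⟨a, b, hab, ?_, ?_, ?_⟩
    · rintro ⟨ha0, hbm⟩
      have hu : u ∈ Set.Icc a b := by
        constructor
        · exact Fin.le_def.2 (by omega)
        · exact Fin.le_def.2 (by have := u.isLt; omega)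
      have hv : v ∈ Set.Icc a b := by
        constructor
        · exact Fin.le_def.2 (by omega)
        · exact Fin.le_def.2 (by have := v.isLt; omega)
      exact huv (J.iseqv.trans (J.iseqv.symm (hicc u hu)) (hicc v hv))
    · intro x hx y hxy
      exact hblocksub y (J.iseqv.trans (hicc x hx) (left_le_ncJoin π ρ hxy))
    · intro x hx y hxy
      exact hblocksub y (J.iseqv.trans (hicc x hx) (right_le_ncJoin π ρ hxy))
  · rintro ⟨a, b, hab, hproper, hπ, hρ⟩
    set I := Set.Icc a b with hI
    set τ : Setoid (Fin m) :=
      ⟨fun x y => (x ∈ I ↔ y ∈ I),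
        ⟨fun _ => Iff.rfl, fun h => h.symm, fun h1 h2 => h1.trans h2⟩⟩ with hτ
    have hNCτ : IsNC τ := by
      intro p q r s h1 h2 h3 hpr hqs
      show p ∈ I ↔ q ∈ I
      constructor
      · intro hp
        have hr : r ∈ I := hpr.1 hp
        exact ⟨le_trans hp.1 (le_of_lt h1), le_trans (le_of_lt h2) hr.2⟩
      · intro hq
        have hs : s ∈ I := hqs.1 hq
        have hr : r ∈ I := ⟨le_trans hq.1 (le_of_lt h2), le_trans (le_of_lt h3) hs.2⟩
        exact hpr.2 hr
    have hπτ : π ≤ τ := by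
      intro x y hxy
      show x ∈ I ↔ y ∈ I
      exact ⟨fun h => hπ x h y hxy, fun h => hπ y h x (π.iseqv.symm hxy)⟩
    have hρτ : ρ ≤ τ := by
      intro x y hxy
      show x ∈ I ↔ y ∈ I
      exact ⟨fun h => hρ x h y hxy, fun h => hρ y h x (ρ.iseqv.symm hxy)⟩
    intro htop
    -- find an element outside the interval
    have hm0 : 0 < m := by
      rcases Nat.eq_zero_or_pos m with h | h
      · exact absurd (a.isLt) (by omega)
      · exact h
    have : ∃ c : Fin m, c ∉ I := by
      by_cases h0 : a.val = 0
      · have hbm : b.val ≠ m - 1 := fun h => hproper ⟨h0, h⟩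
        refine ⟨⟨m - 1, by omega⟩, fun hc => ?_⟩
        have := hc.2
        rw [Fin.le_def] at this
        simp only at this
        have hb := b.isLt
        omega
      · refine ⟨⟨0, hm0⟩, fun hc => ?_⟩
        have := hc.1
        rw [Fin.le_def] at this
        simp only at this
        omega
    obtain ⟨c, hc⟩ := this
    have h1 : τ.r a c := by
      have : (ncJoin π ρ).r a c := htop ▸ trivial
      exact this τ ⟨hNCτ, hπτ, hρτ⟩
    exact hc (h1.1 ⟨le_refl a, hab⟩)

end joinchar

section arch
variable {n : ℕ} (S : Setoid (Fin n))

lemma dOdd_ne_dEven (j k : Fin n) : dOdd j ≠ dEven k := by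
  intro h
  have := congrArg Fin.val h
  simp only [dOdd, dEven] at this
  omega

lemma dOdd_inj {j k : Fin n} (h : dOdd j = dOdd k) : j = k := by
  have := congrArg Fin.val h
  simp only [dOdd] at this
  exact Fin.ext (by omega)

lemma dEven_inj {j k : Fin n} (h : dEven j = dEven k) : j = k := by
  have := congrArg Fin.val h
  simp only [dEven] at this
  exact Fin.ext (by omega)

/-- The relation whose equivalence closure defines `archSetoid`, symmetrized. -/
def pairRel (S : Setoid (Fin n)) (x y : Fin (2*n)) : Prop :=
  x = y ∨ (∃ j : Fin n, x = dOdd j ∧ y = dEven (nextP S j)) ∨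
    (∃ j : Fin n, y = dOdd j ∧ x = dEven (nextP S j))

lemma pairRel_equivalence : Equivalence (pairRel S) := by
  constructor
  · intro x; exact Or.inl rfl
  · rintro x y (h | h | h)
    · exact Or.inl h.symm
    · exact Or.inr (Or.inr h)
    · exact Or.inr (Or.inl h)
  · rintro x y z (h | ⟨j, hx, hy⟩ | ⟨j, hy, hx⟩) h2
    · exact h ▸ h2
    · rcases h2 with h2 | ⟨j', hy', hz⟩ | ⟨j', hz, hy'⟩
      · exact h2 ▸ Or.inr (Or.inl ⟨j, hx, hy⟩)
      · exact absurd (hy'.symm.trans hy) (dOdd_ne_dEven _ _)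
      · have hj : j = j' := nextP_injective S (dEven_inj (hy.symm.trans hy'))
        exact Or.inl (hx.trans (hj ▸ hz.symm))
    · rcases h2 with h2 | ⟨j', hy', hz⟩ | ⟨j', hz, hy'⟩
      · exact Or.inr (Or.inr ⟨j, h2 ▸ hy, hx⟩)
      · have hj : j = j' := dOdd_inj (hy.symm.trans hy')
        refine Or.inl (hx.trans ?_)
        rw [hj, ← hz]
      · exact absurd (hy.symm.trans hy') (dOdd_ne_dEven _ _)

lemma arch_r_iff {x y : Fin (2*n)} : (archSetoid S).r x y ↔ pairRel S x y := by
  constructor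
  · intro h
    induction h with
    | rel a b hab => exact Or.inr (Or.inl hab)
    | refl a => exact Or.inl rfl
    | symm a b _ ih => exact (pairRel_equivalence S).symm ih
    | trans a b c _ _ ih1 ih2 => exact (pairRel_equivalence S).trans ih1 ih2
  · rintro (h | h | ⟨j, hy, hx⟩)
    · exact h ▸ Relation.EqvGen.refl x
    · exact Relation.EqvGen.rel _ _ h
    · exact Relation.EqvGen.symm _ _ (Relation.EqvGen.rel _ _ ⟨j, hy, hx⟩)

end arch

section arch2
variable {n : ℕ} (S : Setoid (Fin n))

lemma nextP_forward {j k : Fin n} (hk : nextP S j = k) (h : j < k) :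
    ∀ l, S.r j l → j < l → k ≤ l := by
  obtain ⟨hr, hcase⟩ := nextP_spec S j
  rcases hcase with ⟨-, hmin⟩ | ⟨hmax, -⟩
  · exact fun l hl hjl => hk ▸ hmin l hl hjl
  · exact absurd (hmax k (hk ▸ hr)) (not_le.mpr h)

lemma nextP_backward {j k : Fin n} (hk : nextP S j = k) (h : k ≤ j) :
    (∀ l, S.r j l → l ≤ j) ∧ (∀ l, S.r j l → k ≤ l) := by
  obtain ⟨hr, hcase⟩ := nextP_spec S j
  rcases hcase with ⟨hlt, -⟩ | ⟨hmax, hmin⟩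
  · exact absurd (hk ▸ hlt) (not_lt.mpr h)
  · exact ⟨hmax, fun l hl => hk ▸ hmin l hl⟩

lemma arch_pairing : IsPairing (archSetoid S) := by
  intro x
  by_cases he : x.val % 2 = 0
  · -- x even
    have hx2 : x.val / 2 < n := by have := x.isLt; omega
    set j : Fin n := ⟨x.val / 2, hx2⟩ with hj
    have hxe : x = dEven j := by
      apply Fin.ext; simp only [dEven, hj]; omega
    refine ⟨dOdd (prevP S j), ?_, ?_, ?_⟩
    · rw [hxe]; exact dOdd_ne_dEven _ _
    · rw [arch_r_iff]
      exact Or.inr (Or.inr ⟨prevP S j, rfl, by rw [nextP_prevP, ← hxe]⟩)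
    · intro z hz
      rw [arch_r_iff] at hz
      rcases hz with h | ⟨j', hx', -⟩ | ⟨j', hz', hx'⟩
      · exact Or.inl h.symm
      · exfalso
        have hv := congrArg Fin.val hx'
        simp only [dOdd] at hv
        omega
      · have h1 : nextP S j' = j := dEven_inj (hxe.symm.trans hx').symm
        have h2 : j' = prevP S j := by
          have := congrArg (prevP S) h1
          rwa [prevP_nextP] at this
        exact Or.inr (h2 ▸ hz')
  · -- x odd
    have hx2 : x.val / 2 < n := by have := x.isLt; omega
    set j : Fin n := ⟨x.val / 2, hx2⟩ with hj
    have hxe : x = dOdd j := by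
      apply Fin.ext; simp only [dOdd, hj]; omega
    refine ⟨dEven (nextP S j), ?_, ?_, ?_⟩
    · rw [hxe]; exact Ne.symm (dOdd_ne_dEven _ _)
    · rw [arch_r_iff]
      exact Or.inr (Or.inl ⟨j, hxe, rfl⟩)
    · intro z hz
      rw [arch_r_iff] at hz
      rcases hz with h | ⟨j', hx', hz'⟩ | ⟨j', hz', hx'⟩
      · exact Or.inl h.symm
      · have h1 : j' = j := dOdd_inj (hxe ▸ hx' : dOdd j = _).symm
        exact Or.inr (h1 ▸ hz')
      · exfalso
        have hv := congrArg Fin.val hx'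
        simp only [dEven] at hv
        omega

lemma arch_NC (hS : IsNC S) : IsNC (archSetoid S) := by
  intro a b c d hab hbc hcd hac hbd
  exfalso
  rw [arch_r_iff] at hac hbd
  have hacne : a ≠ c := ne_of_lt (lt_trans hab hbc)
  have hbdne : b ≠ d := ne_of_lt (lt_trans hbc hcd)
  rcases hac with h | ⟨j1, ha, hc⟩ | ⟨j1, hc, ha⟩
  · exact hacne h
  · set k1 := nextP S j1 with hk1
    rcases hbd with h | ⟨j2, hb, hd⟩ | ⟨j2, hd, hb⟩
    · exact hbdne h
    · -- FF
      set k2 := nextP S j2 with hk2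
      rw [ha, hb, Fin.lt_def] at hab
      rw [hb, hc, Fin.lt_def] at hbc
      rw [hc, hd, Fin.lt_def] at hcd
      simp only [dOdd, dEven] at hab hbc hcd
      have f1 : j1 < j2 := by rw [Fin.lt_def]; omega
      have f2 : j2 < k1 := by rw [Fin.lt_def]; omega
      have f3 : k1 < k2 := by rw [Fin.lt_def]; omega
      have hr12 : S.r j1 j2 := hS j1 j2 k1 k2 f1 f2 f3 (nextP_r S j1) (nextP_r S j2)
      exact absurd (nextP_forward S rfl (lt_trans f1 f2) j2 hr12 f1) (not_le.mpr f2)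
    · -- FB
      set k2 := nextP S j2 with hk2
      rw [ha, hb, Fin.lt_def] at hab
      rw [hb, hc, Fin.lt_def] at hbc
      rw [hc, hd, Fin.lt_def] at hcd
      simp only [dOdd, dEven] at hab hbc hcd
      have f1 : j1 < k2 := by rw [Fin.lt_def]; omega
      have f2 : k2 < k1 := by rw [Fin.lt_def]; omega
      have f3 : k1 ≤ j2 := by rw [Fin.le_def]; omega
      have hB2 := nextP_backward S (rfl : nextP S j2 = k2) (le_of_lt (lt_of_lt_of_le f2 f3))
      rcases eq_or_lt_of_le f3 with heq | hlt
      · have h1 : S.r j2 j1 := S.iseqv.symm (heq ▸ nextP_r S j1)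
        exact absurd (hB2.2 j1 h1) (not_le.mpr f1)
      · have hcross : S.r j1 k2 :=
          hS j1 k2 k1 j2 f1 f2 hlt (nextP_r S j1) (S.iseqv.symm (nextP_r S j2))
        exact absurd (nextP_forward S rfl (lt_trans f1 f2) k2 hcross f1) (not_le.mpr f2)
  · set k1 := nextP S j1 with hk1
    rcases hbd with h | ⟨j2, hb, hd⟩ | ⟨j2, hd, hb⟩
    · exact hbdne h
    · -- BF
      set k2 := nextP S j2 with hk2
      rw [ha, hb, Fin.lt_def] at hab
      rw [hb, hc, Fin.lt_def] at hbc
      rw [hc, hd, Fin.lt_def] at hcd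
      simp only [dOdd, dEven] at hab hbc hcd
      have f1 : k1 ≤ j2 := by rw [Fin.le_def]; omega
      have f2 : j2 < j1 := by rw [Fin.lt_def]; omega
      have f3 : j1 < k2 := by rw [Fin.lt_def]; omega
      by_cases h21 : S.r j2 j1
      · exact absurd (nextP_forward S (rfl : nextP S j2 = k2) (lt_trans f2 f3) j1 h21 f2)
          (not_le.mpr f3)
      · rcases eq_or_lt_of_le f1 with heq | hlt
        · exact h21 (heq ▸ S.iseqv.symm (nextP_r S j1))
        · have hcross : S.r k1 j2 := hS k1 j2 j1 k2 hlt f2 f3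
            (S.iseqv.symm (nextP_r S j1)) (nextP_r S j2)
          exact h21 (S.iseqv.trans (S.iseqv.symm hcross) (S.iseqv.symm (nextP_r S j1)))
    · -- BB
      set k2 := nextP S j2 with hk2
      rw [ha, hb, Fin.lt_def] at hab
      rw [hb, hc, Fin.lt_def] at hbc
      rw [hc, hd, Fin.lt_def] at hcd
      simp only [dOdd, dEven] at hab hbc hcd
      have f1 : k1 < k2 := by rw [Fin.lt_def]; omega
      have f2 : k2 ≤ j1 := by rw [Fin.le_def]; omega
      have f3 : j1 < j2 := by rw [Fin.lt_def]; omega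
      by_cases h12 : S.r j1 j2
      · have hB1 := nextP_backward S (rfl : nextP S j1 = k1) (le_trans (le_of_lt f1) f2)
        exact absurd (hB1.1 j2 h12) (not_le.mpr f3)
      · rcases eq_or_lt_of_le f2 with heq | hlt
        · exact h12 (S.iseqv.symm (heq ▸ nextP_r S j2))
        · have hcross : S.r k1 k2 := hS k1 k2 j1 j2 f1 hlt f3
            (S.iseqv.symm (nextP_r S j1)) (S.iseqv.symm (nextP_r S j2))
          exact h12 (S.iseqv.trans (S.iseqv.trans (nextP_r S j1) hcross)
            (S.iseqv.symm (nextP_r S j2)))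

/-- Block-union translation for the arch setoid. -/
lemma isBlockUnion_arch_iff {A : Set (Fin (2*n))} :
    IsBlockUnion (archSetoid S) A ↔ ∀ j : Fin n, (dOdd j ∈ A ↔ dEven (nextP S j) ∈ A) := by
  constructor
  · intro h j
    constructor
    · intro hj
      exact h _ hj _ ((arch_r_iff S).2 (Or.inr (Or.inl ⟨j, rfl, rfl⟩)))
    · intro hj
      exact h _ hj _ ((arch_r_iff S).2 (Or.inr (Or.inr ⟨j, rfl, rfl⟩)))
  · intro h x hx y hxy
    rw [arch_r_iff] at hxy
    rcases hxy with h' | ⟨j, hx', hy'⟩ | ⟨j, hy', hx'⟩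
    · exact h' ▸ hx
    · exact hy' ▸ (h j).1 (hx' ▸ hx)
    · exact hy' ▸ (h j).2 (hx' ▸ hx)

lemma arch_injective {T : Setoid (Fin n)} (h : archSetoid S = archSetoid T) : S = T := by
  have hnext : nextP S = nextP T := by
    funext j
    have h1 : (archSetoid T).r (dOdd j) (dEven (nextP S j)) := by
      rw [← h, arch_r_iff]
      exact Or.inr (Or.inl ⟨j, rfl, rfl⟩)
    rw [arch_r_iff] at h1
    rcases h1 with h' | ⟨j', hj', he⟩ | ⟨j', hj', he⟩
    · exact absurd h' (dOdd_ne_dEven _ _)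
    · have h2 := dEven_inj he
      rw [← dOdd_inj hj'] at h2
      exact h2
    · exact absurd hj'.symm (dOdd_ne_dEven _ _)
  apply Setoid.ext
  intro x y
  rw [← eqvGen_nextP_iff S, ← eqvGen_nextP_iff T, hnext]

end arch2

section pairings
variable {m : ℕ} {T : Setoid (Fin m)}

noncomputable def partner (hT : IsPairing T) (x : Fin m) : Fin m := (hT x).choose

lemma partner_ne (hT : IsPairing T) (x : Fin m) : partner hT x ≠ x := (hT x).choose_spec.1

lemma partner_r (hT : IsPairing T) (x : Fin m) : T.r x (partner hT x) :=
  (hT x).choose_spec.2.1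

lemma partner_spec (hT : IsPairing T) (x : Fin m) :
    ∀ z, T.r x z → z = x ∨ z = partner hT x := (hT x).choose_spec.2.2

lemma partner_partner (hT : IsPairing T) (x : Fin m) : partner hT (partner hT x) = x := by
  rcases partner_spec hT (partner hT x) x (T.iseqv.symm (partner_r hT x)) with h | h
  · exact absurd h.symm (partner_ne hT x)
  · exact h.symm

lemma partner_injective (hT : IsPairing T) : Function.Injective (partner hT) := by
  intro x y h
  have := congrArg (partner hT) h
  rwa [partner_partner, partner_partner] at this

lemma pairing_r_iff (hT : IsPairing T) {x y : Fin m} :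
    T.r x y ↔ y = x ∨ y = partner hT x := by
  constructor
  · exact partner_spec hT x y
  · rintro (h | h)
    · exact h ▸ T.iseqv.refl x
    · exact h ▸ partner_r hT x

lemma even_card_of_partner_closed (hT : IsPairing T) :
    ∀ A : Finset (Fin m), (∀ x ∈ A, partner hT x ∈ A) → Even A.card := by
  intro A
  induction A using Finset.strongInductionOn with
  | _ A ih =>
    intro h
    rcases A.eq_empty_or_nonempty with rfl | ⟨x, hx⟩
    · simp
    · have hxp : partner hT x ∈ A := h x hx
      set P : Finset (Fin m) := {x, partner hT x} with hP
      have hPA : P ⊆ A := by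
        intro z hz
        rcases Finset.mem_insert.1 hz with rfl | hz
        · exact hx
        · exact (Finset.mem_singleton.1 hz) ▸ hxp
      have hssub : A \ P ⊂ A :=
        Finset.sdiff_ssubset hPA ⟨x, Finset.mem_insert_self _ _⟩
      have hclosed : ∀ y ∈ A \ P, partner hT y ∈ A \ P := by
        intro y hy
        rw [Finset.mem_sdiff] at hy ⊢
        refine ⟨h y hy.1, fun hc => hy.2 ?_⟩
        rcases Finset.mem_insert.1 hc with hc | hc
        · -- partner y = x, so y = partner x
          have : y = partner hT x := by
            have := congrArg (partner hT) hc
            rwa [partner_partner] at this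
          exact this ▸ Finset.mem_insert.2 (Or.inr (Finset.mem_singleton.2 rfl))
        · have hc' := Finset.mem_singleton.1 hc
          have : y = x := by
            have := congrArg (partner hT) hc'
            rwa [partner_partner, partner_partner] at this
          exact this ▸ Finset.mem_insert_self _ _
      have hcard : (A \ P).card = A.card - 2 := by
        rw [Finset.card_sdiff_of_subset hPA, hP]
        congr 1
        rw [Finset.card_insert_of_notMem (by simp [Ne.symm (partner_ne hT x)]),
          Finset.card_singleton]
      have hA2 : 2 ≤ A.card := by
        calc 2 = P.card := by
              rw [hP, Finset.card_insert_of_notMem (by simp [Ne.symm (partner_ne hT x)]),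
                Finset.card_singleton]
          _ ≤ A.card := Finset.card_le_card hPA
      have hev := ih _ hssub hclosed
      rw [hcard] at hev
      obtain ⟨r, hr⟩ := hev
      exact ⟨r + 1, by omega⟩

/-- In a noncrossing pairing, partners have opposite parities. -/
lemma partner_parity (hT : IsPairing T) (hNC : IsNC T) (x : Fin m) :
    (partner hT x).val % 2 ≠ x.val % 2 := by
  -- auxiliary claim for x < partner x
  have aux : ∀ y : Fin m, y < partner hT y → (partner hT y).val % 2 ≠ y.val % 2 := by
    intro y hy
    set p := partner hT y with hp
    have hcl : ∀ z ∈ Finset.Ioo y p, partner hT z ∈ Finset.Ioo y p := by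
      intro z hz
      rw [Finset.mem_Ioo] at hz ⊢
      set q := partner hT z with hq
      have hqy : q ≠ y := by
        intro h
        have : z = p := by
          have h2 := congrArg (partner hT) h
          rw [hq, partner_partner, ← hp] at h2
          exact h2
        exact absurd (this ▸ hz.2) (lt_irrefl p)
      have hqp : q ≠ p := by
        intro h
        have : z = y := by
          have h2 := congrArg (partner hT) h
          rw [hq, partner_partner, hp, partner_partner] at h2
          exact h2
        exact absurd (this ▸ hz.1) (lt_irrefl y)
      constructor
      · rcases lt_trichotomy y q with h' | h' | h'
        · exact h'
        · exact (hqy h'.symm).elim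
        · -- q < y < z < p crossing
          exfalso
          have hcross := hNC q y z p h' hz.1 hz.2
            (T.iseqv.symm (partner_r hT z)) (partner_r hT y)
          rcases partner_spec hT q y hcross with h2 | h2
          · exact hqy h2.symm
          · rw [hq, partner_partner] at h2
            exact absurd (h2 ▸ hz.1) (lt_irrefl _)
      · rcases lt_trichotomy q p with h' | h' | h'
        · exact h'
        · exact (hqp h').elim
        · -- y < z < p < q crossing
          exfalso
          have hcross := hNC y z p q hz.1 hz.2 h' (partner_r hT y) (partner_r hT z)
          rcases partner_spec hT y z hcross with h2 | h2
          · exact absurd (h2 ▸ hz.1) (lt_irrefl _)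
          · exact absurd (h2 ▸ hz.2) (lt_irrefl _)
    have hev := even_card_of_partner_closed hT _ hcl
    rw [Fin.card_Ioo] at hev
    obtain ⟨r, hr⟩ := hev
    have hy' : y.val < p.val := hy
    omega
  rcases lt_trichotomy x (partner hT x) with h | h | h
  · exact aux x h
  · exact absurd h.symm (partner_ne hT x)
  · have := aux (partner hT x) (by rwa [partner_partner])
    rw [partner_partner] at this
    exact this.symm
end pairings

section inverse
variable {n : ℕ} {σ : Setoid (Fin (2*n))}

lemma dlt_oo {a b : Fin n} (h : a < b) : dOdd a < dOdd b := by
  rw [Fin.lt_def] at h ⊢; simp only [dOdd]; omega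
lemma dlt_ee {a b : Fin n} (h : a < b) : dEven a < dEven b := by
  rw [Fin.lt_def] at h ⊢; simp only [dEven]; omega
lemma dlt_oe {a b : Fin n} (h : a < b) : dOdd a < dEven b := by
  rw [Fin.lt_def] at h ⊢; simp only [dOdd, dEven]; omega
lemma dlt_eo {a b : Fin n} (h : a ≤ b) : dEven a < dOdd b := by
  rw [Fin.le_def] at h; rw [Fin.lt_def]; simp only [dOdd, dEven]; omega

/-- The inverse doubling: the map `j ↦ P(j)` extracted from a noncrossing pairing. -/
noncomputable def invF (hp : IsPairing σ) (j : Fin n) : Fin n :=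
  ⟨(partner hp (dOdd j)).val / 2, by have := (partner hp (dOdd j)).isLt; omega⟩

variable (hp : IsPairing σ)

lemma partner_dOdd (hNC : IsNC σ) (j : Fin n) : partner hp (dOdd j) = dEven (invF hp j) := by
  have hpar := partner_parity hp hNC (dOdd j)
  have h1 : (dOdd j).val = 2*j.val+1 := rfl
  apply Fin.ext
  show (partner hp (dOdd j)).val = 2 * ((partner hp (dOdd j)).val / 2)
  omega

lemma pair_odd (hNC : IsNC σ) (j : Fin n) : σ.r (dOdd j) (dEven (invF hp j)) := by
  rw [← partner_dOdd hp hNC]; exact partner_r hp _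

lemma partner_dEven_invF (hNC : IsNC σ) (j : Fin n) : partner hp (dEven (invF hp j)) = dOdd j := by
  rw [← partner_dOdd hp hNC, partner_partner]

lemma invF_injective (hNC : IsNC σ) : Function.Injective (invF hp) := by
  intro a b h
  have h2 : dEven (invF hp a) = dEven (invF hp b) := by rw [h]
  rw [← partner_dOdd hp hNC, ← partner_dOdd hp hNC] at h2
  exact dOdd_inj (partner_injective hp h2)

/-- the setoid on `Fin n` induced by `σ`. -/
noncomputable def sigOf (hp : IsPairing σ) : Setoid (Fin n) :=
  Relation.EqvGen.setoid (fun a b => invF hp a = b)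

/-- orbit closure for injective maps -/
lemma eqvGen_mem_closed {g : Fin n → Fin n} (hg : Function.Injective g)
    (A : Finset (Fin n)) (hA : ∀ l ∈ A, g l ∈ A) :
    ∀ x y : Fin n, Relation.EqvGen (fun a b => g a = b) x y → (x ∈ A ↔ y ∈ A) := by
  have hpre : ∀ l, g l ∈ A → l ∈ A := by
    intro l hl
    have himg : A.image g ⊆ A := by
      intro z hz
      obtain ⟨w, hw, rfl⟩ := Finset.mem_image.1 hz
      exact hA w hw
    have heq : A.image g = A :=
      Finset.eq_of_subset_of_card_le himg (le_of_eq (Finset.card_image_of_injective A hg).symm)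
    rw [← heq] at hl
    obtain ⟨w, hw, hwl⟩ := Finset.mem_image.1 hl
    rwa [← hg hwl]
  intro x y hxy
  induction hxy with
  | rel a b hab => exact hab ▸ ⟨fun h => hA a h, fun h => hpre a h⟩
  | refl a => exact Iff.rfl
  | symm a b _ ih => exact ih.symm
  | trans a b c _ _ ih1 ih2 => exact ih1.trans ih2

lemma sig_rel_base (j : Fin n) : (sigOf hp).r j (invF hp j) :=
  Relation.EqvGen.rel _ _ rfl

/-- Key lemma: the cycle map of the orbit partition of `invF` is `invF` itself. -/
lemma nextP_sigOf (hNC : IsNC σ) : nextP (sigOf hp) = invF hp := by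
  funext j
  set f := invF hp with hf
  set sg := sigOf hp with hsg
  set k := f j with hk
  have hrel : sg.r j k := sig_rel_base hp j
  by_cases hjk : j < k
  · -- forward case
    set A : Finset (Fin n) := Finset.univ.filter (fun l => l ≤ j ∨ k ≤ l) with hA
    have hclosed : ∀ l ∈ A, f l ∈ A := by
      intro l hl
      simp only [hA, Finset.mem_filter, Finset.mem_univ, true_and] at hl ⊢
      by_contra hc
      push_neg at hc
      obtain ⟨hc1, hc2⟩ := hc
      rcases hl with hl | hl
      · rcases eq_or_lt_of_le hl with rfl | hl'
        · exact absurd hc2 (not_lt.mpr (le_refl _))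
        · -- l < j, crossing (dOdd l) (dOdd j) (dEven (f l)) (dEven k)
          have hcross := hNC (dOdd l) (dOdd j) (dEven (f l)) (dEven k)
            (dlt_oo hl') (dlt_oe hc1) (dlt_ee hc2)
            (pair_odd hp hNC l) (pair_odd hp hNC j)
          rcases partner_spec hp (dOdd l) _ hcross with h2 | h2
          · exact absurd (dOdd_inj h2) (ne_of_gt hl')
          · rw [partner_dOdd hp hNC] at h2
            exact absurd h2 (dOdd_ne_dEven _ _)
      · -- k ≤ l, crossing (dOdd j) (dEven (f l)) (dEven k) (dOdd l)
        have hcross := hNC (dOdd j) (dEven (f l)) (dEven k) (dOdd l)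
          (dlt_oe hc1) (dlt_ee hc2) (dlt_eo hl)
          (pair_odd hp hNC j) (σ.iseqv.symm (pair_odd hp hNC l))
        rcases partner_spec hp (dOdd j) _ hcross with h2 | h2
        · exact absurd h2.symm (dOdd_ne_dEven _ _)
        · rw [partner_dOdd hp hNC] at h2
          have : f l = f j := dEven_inj h2
          have hlj : l = j := invF_injective hp hNC this
          rw [hlj] at hl
          exact absurd (lt_of_lt_of_le hjk hl) (lt_irrefl _)
    have hblock : ∀ l, sg.r j l → l ∈ A := by
      intro l hl
      have hj : j ∈ A := by
        simp only [hA, Finset.mem_filter, Finset.mem_univ, true_and]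
        exact Or.inl (le_refl j)
      exact (eqvGen_mem_closed (invF_injective hp hNC) A hclosed j l hl).1 hj
    obtain ⟨hr, hcase⟩ := nextP_spec sg j
    rcases hcase with ⟨hlt, hmin⟩ | ⟨hmax, -⟩
    · have h1 : nextP sg j ≤ k := hmin k hrel hjk
      have h2 : nextP sg j ∈ A := hblock _ hr
      simp only [hA, Finset.mem_filter, Finset.mem_univ, true_and] at h2
      rcases h2 with h2 | h2
      · exact absurd (lt_of_lt_of_le hlt h2) (lt_irrefl _)
      · exact le_antisymm h1 h2
    · exact absurd (hmax k hrel) (not_le.mpr hjk)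
  · -- backward case : k ≤ j
    rw [not_lt] at hjk
    set A : Finset (Fin n) := Finset.Icc k j with hA
    have hclosed : ∀ l ∈ A, f l ∈ A := by
      intro l hl
      rw [hA, Finset.mem_Icc] at hl ⊢
      by_contra hc
      push_neg at hc
      by_cases hfl : f l < k
      · -- crossing (dEven (f l)) (dEven k) (dOdd l) (dOdd j)
        have hlj : l < j := by
          rcases eq_or_lt_of_le hl.2 with rfl | h'
          · exact absurd hfl (not_lt.mpr (le_refl k))
          · exact h'
        have hcross := hNC (dEven (f l)) (dEven k) (dOdd l) (dOdd j)
          (dlt_ee hfl) (dlt_eo hl.1) (dlt_oo hlj)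
          (σ.iseqv.symm (pair_odd hp hNC l)) (σ.iseqv.symm (pair_odd hp hNC j))
        rcases partner_spec hp (dEven (f l)) _ hcross with h2 | h2
        · exact absurd (dEven_inj h2) (ne_of_gt hfl)
        · rw [partner_dEven_invF hp hNC] at h2
          exact absurd h2.symm (dOdd_ne_dEven _ _)
      · -- f l > j
        have hfl2 : j < f l := hc (not_lt.mp hfl)
        have hlj : l < j := by
          rcases eq_or_lt_of_le hl.2 with rfl | h'
          · exact absurd hfl2 (not_lt.mpr hjk)
          · exact h'
        have hcross := hNC (dEven k) (dOdd l) (dOdd j) (dEven (f l))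
          (dlt_eo hl.1) (dlt_oo hlj) (dlt_oe hfl2)
          (σ.iseqv.symm (pair_odd hp hNC j)) (pair_odd hp hNC l)
        rcases partner_spec hp (dEven k) _ hcross with h2 | h2
        · exact absurd h2 (dOdd_ne_dEven _ _)
        · rw [show k = f j from hk, partner_dEven_invF hp hNC] at h2
          exact absurd (dOdd_inj h2) (ne_of_lt hlj)
    have hblock : ∀ l, sg.r j l → l ∈ A := by
      intro l hl
      have hj : j ∈ A := by rw [hA, Finset.mem_Icc]; exact ⟨hjk, le_refl j⟩
      exact (eqvGen_mem_closed (invF_injective hp hNC) A hclosed j l hl).1 hj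
    obtain ⟨hr, hcase⟩ := nextP_spec sg j
    rcases hcase with ⟨hlt, -⟩ | ⟨-, hmin⟩
    · have h2 := hblock _ hr
      rw [hA, Finset.mem_Icc] at h2
      exact absurd (lt_of_lt_of_le hlt h2.2) (lt_irrefl _)
    · have h1 : nextP sg j ≤ k := hmin k hrel
      have h2 := hblock _ hr
      rw [hA, Finset.mem_Icc] at h2
      exact le_antisymm h1 h2.1

/-- the doubling of `sigOf` recovers `σ`. -/
lemma arch_sigOf (hNC : IsNC σ) : archSetoid (sigOf hp) = σ := by
  apply Setoid.ext
  intro x y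
  rw [show (archSetoid (sigOf hp)) x y ↔ (archSetoid (sigOf hp)).r x y from Iff.rfl,
    arch_r_iff, show (σ x y ↔ σ.r x y) from Iff.rfl]
  unfold pairRel
  rw [nextP_sigOf hp hNC]
  constructor
  · rintro (rfl | ⟨j, rfl, rfl⟩ | ⟨j, rfl, rfl⟩)
    · exact σ.iseqv.refl x
    · exact pair_odd hp hNC j
    · exact σ.iseqv.symm (pair_odd hp hNC j)
  · intro h
    rcases partner_spec hp x y h with rfl | rfl
    · exact Or.inl rfl
    · by_cases hpar : x.val % 2 = 0
      · -- x even : use surjectivity of invF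
        have hx2 : x.val / 2 < n := by have := x.isLt; omega
        set j' : Fin n := ⟨x.val / 2, hx2⟩ with hj'
        have hxe : x = dEven j' := by apply Fin.ext; simp only [dEven, hj']; omega
        obtain ⟨j, hjj⟩ := (Finite.injective_iff_surjective.1 (invF_injective hp hNC)) j'
        refine Or.inr (Or.inr ⟨j, ?_, by rw [hxe, hjj]⟩)
        rw [hxe, ← hjj, ← partner_dEven_invF hp hNC]
      · have hx2 : x.val / 2 < n := by have := x.isLt; omega
        set j : Fin n := ⟨x.val / 2, hx2⟩ with hj
        have hxe : x = dOdd j := by apply Fin.ext; simp only [dOdd, hj]; omega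
        refine Or.inr (Or.inl ⟨j, hxe, ?_⟩)
        rw [hxe, partner_dOdd hp hNC]

/-- the induced partition is noncrossing. -/
lemma isNC_sigOf (hNC : IsNC σ) : IsNC (sigOf hp) := by
  intro a b c d hab hbc hcd hac hbd
  set sg := sigOf hp with hsg
  by_contra hrab
  -- u : largest element of block(a) which is ≤ b
  have hne1 : ((blockOf sg a).filter (fun l => l ≤ b)).Nonempty :=
    ⟨a, by simp only [Finset.mem_filter, mem_blockOf]; exact ⟨sg.iseqv.refl a, le_of_lt hab⟩⟩
  set u := ((blockOf sg a).filter (fun l => l ≤ b)).max' hne1 with hu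
  have humem := Finset.max'_mem _ hne1
  rw [Finset.mem_filter, mem_blockOf] at humem
  obtain ⟨hua, hub⟩ := humem
  have hub' : u < b := lt_of_le_of_ne hub (fun h => hrab (h ▸ hua))
  have hcu : sg.r u c := sg.iseqv.trans (sg.iseqv.symm hua) hac
  have hcub : u < c := lt_trans hub' hbc
  -- v = nextP u
  set v := nextP sg u with hv
  obtain ⟨hvr, hvcase⟩ := nextP_spec sg u
  rcases hvcase with ⟨hvlt, hvmin⟩ | ⟨hvmax, -⟩
  swap
  · exact absurd (hvmax c hcu) (not_le.mpr hcub)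
  have hvc : v ≤ c := hvmin c hcu hcub
  have hva : sg.r a v := sg.iseqv.trans hua hvr
  have hvb : b < v := by
    by_contra hc
    rw [not_lt] at hc
    have : v ∈ (blockOf sg a).filter (fun l => l ≤ b) := by
      rw [Finset.mem_filter, mem_blockOf]; exact ⟨hva, hc⟩
    exact absurd (Finset.le_max' _ _ this) (not_le.mpr hvlt)
  -- w : largest element of block(b) which is < v
  have hne2 : ((blockOf sg b).filter (fun l => l < v)).Nonempty :=
    ⟨b, by simp only [Finset.mem_filter, mem_blockOf]; exact ⟨sg.iseqv.refl b, hvb⟩⟩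
  set w := ((blockOf sg b).filter (fun l => l < v)).max' hne2 with hw
  have hwmem := Finset.max'_mem _ hne2
  rw [Finset.mem_filter, mem_blockOf] at hwmem
  obtain ⟨hwb, hwv⟩ := hwmem
  have hbw : b ≤ w := Finset.le_max' _ _ (by
    rw [Finset.mem_filter, mem_blockOf]; exact ⟨sg.iseqv.refl b, hvb⟩)
  have hdw : sg.r w d := sg.iseqv.trans (sg.iseqv.symm hwb) hbd
  have hwd : w < d := lt_of_lt_of_le hwv (le_trans hvc (le_of_lt hcd))
  set x := nextP sg w with hx
  obtain ⟨hxr, hxcase⟩ := nextP_spec sg w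
  rcases hxcase with ⟨hxlt, hxmin⟩ | ⟨hxmax, -⟩
  swap
  · exact absurd (hxmax d hdw) (not_le.mpr hwd)
  have hxv : v ≤ x := by
    by_contra hc
    have hxv' : x < v := lt_of_not_ge hc
    have : x ∈ (blockOf sg b).filter (fun l => l < v) := by
      rw [Finset.mem_filter, mem_blockOf]
      exact ⟨sg.iseqv.trans hwb hxr, hxv'⟩
    exact absurd (Finset.le_max' _ _ this) (not_le.mpr hxlt)
  rcases eq_or_lt_of_le hxv with heq | hlt
  · -- v = x, so the blocks of a and b meet
    have hbx : sg.r b x := sg.iseqv.trans hwb hxr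
    have hbv : sg.r b v := heq ▸ hbx
    exact hrab (sg.iseqv.trans hva (sg.iseqv.symm hbv))
  · -- v < x : crossing of the σ-pairs {dOdd u, dEven v} and {dOdd w, dEven x}
    have hveq : v = invF hp u := by rw [hv, hsg, nextP_sigOf hp hNC]
    have hxeq : x = invF hp w := by rw [hx, hsg, nextP_sigOf hp hNC]
    have hpu : σ.r (dOdd u) (dEven v) := by rw [hveq]; exact pair_odd hp hNC u
    have hpw : σ.r (dOdd w) (dEven x) := by rw [hxeq]; exact pair_odd hp hNC w
    have huw : u < w := lt_of_lt_of_le hub' hbw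
    have hcross := hNC (dOdd u) (dOdd w) (dEven v) (dEven x)
      (dlt_oo huw) (dlt_oe hwv) (dlt_ee hlt) hpu hpw
    rcases partner_spec hp (dOdd u) _ hcross with h2 | h2
    · exact absurd (dOdd_inj h2) (ne_of_gt huw)
    · have h3 : partner hp (dOdd u) = dEven v := by
        rcases partner_spec hp (dOdd u) _ hpu with h4 | h4
        · exact absurd h4.symm (dOdd_ne_dEven _ _)
        · exact h4.symm
      rw [h3] at h2
      exact absurd h2 (dOdd_ne_dEven _ _)
end inverse

section main
variable {n : ℕ}

lemma dOdd_mem_Icc {a b : Fin (2*n)} {j : Fin n} :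
    dOdd j ∈ Set.Icc a b ↔ (a.val ≤ 2*j.val+1 ∧ 2*j.val+1 ≤ b.val) := by
  simp only [Set.mem_Icc, Fin.le_def, dOdd]

lemma dEven_mem_Icc {a b : Fin (2*n)} {j : Fin n} :
    dEven j ∈ Set.Icc a b ↔ (a.val ≤ 2*j.val ∧ 2*j.val ≤ b.val) := by
  simp only [Set.mem_Icc, Fin.le_def, dEven]

/-- blocks through the interior of a link of `π` stay inside. -/
lemma block_subset_Ioo {π : Setoid (Fin n)} (hπ : IsNC π) {x y j : Fin n}
    (hxy : π.r x y) (hxj : ¬ π.r x j) (hj1 : x < j) (hj2 : j < y) :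
    ∀ l, π.r j l → x < l ∧ l < y := by
  intro l hl
  constructor
  · rcases lt_trichotomy l x with h' | h' | h'
    · exfalso
      have hcross := hπ l x j y h' hj1 hj2 (π.iseqv.symm hl) hxy
      exact hxj (π.iseqv.trans (π.iseqv.symm hcross) (π.iseqv.symm hl))
    · exact (hxj (π.iseqv.symm (h' ▸ hl))).elim
    · exact h'
  · rcases lt_trichotomy l y with h' | h' | h'
    · exact h'
    · exact (hxj (π.iseqv.trans hxy (π.iseqv.symm (h' ▸ hl)))).elim
    · exfalso
      have hcross := hπ x j y l hj1 hj2 h' hxy hl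
      exact hxj hcross

/-- If `x ∼ y` in `π` (noncrossing) with `x < y`, then the odd interval condition holds. -/
lemma meet_interval_closure {π : Setoid (Fin n)} (hπ : IsNC π) {x y : Fin n}
    (hxy : π.r x y) (hlt : x < y) (j : Fin n) :
    (x ≤ j ∧ j < y) ↔ (x < nextP π j ∧ nextP π j ≤ y) := by
  set k := nextP π j with hk
  have hjk : π.r j k := nextP_r π j
  constructor
  · rintro ⟨h1, h2⟩
    by_cases hj : π.r x j
    · have hjy : π.r j y := π.iseqv.trans (π.iseqv.symm hj) hxy
      have hfwd := nextP_spec π j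
      rcases hfwd.2 with ⟨hlt', hmin⟩ | ⟨hmax, -⟩
      · exact ⟨lt_of_le_of_lt h1 hlt', hmin y hjy h2⟩
      · exact absurd (hmax y hjy) (not_le.mpr h2)
    · have hj1 : x < j := lt_of_le_of_ne h1 (fun h => hj (h ▸ π.iseqv.refl x))
      have hsub := block_subset_Ioo hπ hxy hj hj1 h2 k hjk
      exact ⟨hsub.1, le_of_lt hsub.2⟩
  · rintro ⟨h1, h2⟩
    by_cases hxk : π.r x k
    · have hxj : π.r x j := π.iseqv.trans hxk (π.iseqv.symm hjk)
      constructor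
      · by_contra hc
        have hjx : j < x := lt_of_not_ge hc
        have hjk' : j < k := lt_trans hjx h1
        have := nextP_forward π rfl hjk' x (π.iseqv.symm hxj) hjx
        exact absurd (lt_of_lt_of_le h1 this) (lt_irrefl _)
      · by_contra hc
        have hyj : y ≤ j := not_lt.mp hc
        have hkj : k ≤ j := le_trans h2 hyj
        have hback := nextP_backward π rfl hkj
        exact absurd (hback.2 x (π.iseqv.symm hxj)) (not_le.mpr h1)
    · have hky : k ≠ y := fun h => hxk (h ▸ hxy)
      have hk2 : k < y := lt_of_le_of_ne h2 hky
      have hsub := block_subset_Ioo hπ hxy hxk h1 hk2 j (π.iseqv.symm hjk)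
      exact ⟨le_of_lt hsub.1, hsub.2⟩

/-- From the closure of an odd-even interval, deduce `s ∼ t`. -/
lemma closure_to_rel {π : Setoid (Fin n)} {s t : Fin n} (hst : s < t)
    (hcl : ∀ j : Fin n, (s ≤ j ∧ j < t) ↔ (s < nextP π j ∧ nextP π j ≤ t)) :
    π.r s t := by
  have hne : ((blockOf π s).filter (fun l => l ≤ t)).Nonempty :=
    ⟨s, by simp only [Finset.mem_filter, mem_blockOf]; exact ⟨π.iseqv.refl s, le_of_lt hst⟩⟩
  set M := ((blockOf π s).filter (fun l => l ≤ t)).max' hne with hM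
  have hmem := Finset.max'_mem _ hne
  rw [Finset.mem_filter, mem_blockOf] at hmem
  obtain ⟨hMs, hMt⟩ := hmem
  have hsM : s ≤ M := Finset.le_max' _ _ (by
    simp only [Finset.mem_filter, mem_blockOf]; exact ⟨π.iseqv.refl s, le_of_lt hst⟩)
  rcases eq_or_lt_of_le hMt with heq | hlt
  · exact heq ▸ hMs
  · exfalso
    have h1 := (hcl M).1 ⟨hsM, hlt⟩
    have hnr : π.r s (nextP π M) := π.iseqv.trans hMs (nextP_r π M)
    have hle : nextP π M ≤ M := Finset.le_max' _ _ (by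
      simp only [Finset.mem_filter, mem_blockOf]; exact ⟨hnr, h1.2⟩)
    obtain ⟨-, hcase⟩ := nextP_spec π M
    rcases hcase with ⟨hlt', -⟩ | ⟨-, hmin⟩
    · exact absurd hle (not_le.mpr hlt')
    · exact absurd (hmin s (π.iseqv.symm hMs)) (not_le.mpr h1.1)

lemma inf_ne_bot_iff {π ρ : Setoid (Fin n)} :
    π ⊓ ρ ≠ ⊥ ↔ ∃ x y : Fin n, x ≠ y ∧ π.r x y ∧ ρ.r x y := by
  constructor
  · intro h
    by_contra hc
    push_neg at hc
    apply h
    apply Setoid.ext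
    intro x y
    constructor
    · intro hxy
      by_contra hne
      exact hc x y hne hxy.1 hxy.2
    · intro h
      exact h ▸ ⟨π.iseqv.refl x, ρ.iseqv.refl x⟩
  · rintro ⟨x, y, hne, h1, h2⟩ hbot
    have : (π ⊓ ρ).r x y := ⟨h1, h2⟩
    rw [hbot] at this
    exact hne this
end main

section assemble
variable {n : ℕ} {π ρ : Setoid (Fin n)}

lemma mem_Icc_val {m : ℕ} {a b j : Fin m} :
    j ∈ Set.Icc a b ↔ (a.val ≤ j.val ∧ j.val ≤ b.val) := by
  simp only [Set.mem_Icc, Fin.le_def]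

lemma arch_join_ne_top_iff (hπ : IsNC π) (hρ : IsNC ρ) :
    ncJoin (archSetoid π) (archSetoid ρ) ≠ ⊤ ↔ (ncJoin π ρ ≠ ⊤ ∨ π ⊓ ρ ≠ ⊥) := by
  rw [ncJoin_ne_top_iff]
  constructor
  · rintro ⟨a, b, hab, hproper, hBπ, hBρ⟩
    have hn0 : 0 < n := by have := a.isLt; omega
    have habv : a.val ≤ b.val := hab
    have hbv := b.isLt
    -- even cardinality of the interval
    have hevcl : ∀ z ∈ Finset.Icc a b, partner (arch_pairing π) z ∈ Finset.Icc a b := by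
      intro z hz
      rw [Finset.mem_Icc] at hz ⊢
      have hmem := hBπ z ⟨hz.1, hz.2⟩ _ (partner_r (arch_pairing π) z)
      exact ⟨hmem.1, hmem.2⟩
    have hev := even_card_of_partner_closed (arch_pairing π) _ hevcl
    rw [Fin.card_Icc] at hev
    obtain ⟨r, hr⟩ := hev
    by_cases hpa : a.val % 2 = 0
    · -- type 1 : a even, b odd : interval of `Fin n`
      left
      rw [ncJoin_ne_top_iff]
      have ha2 : a.val / 2 < n := by omega
      have hb2 : b.val / 2 < n := by omega
      set a' : Fin n := ⟨a.val/2, ha2⟩ with ha'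
      set b' : Fin n := ⟨b.val/2, hb2⟩ with hb'
      have e1 : a'.val = a.val / 2 := rfl
      have e2 : b'.val = b.val / 2 := rfl
      have hbodd : b.val % 2 = 1 := by omega
      have haval : a.val = 2 * a'.val := by omega
      have hbval : b.val = 2 * b'.val + 1 := by omega
      have trans1 : ∀ j : Fin n, (dOdd j ∈ Set.Icc a b ↔ j ∈ Set.Icc a' b') := by
        intro j
        rw [dOdd_mem_Icc, mem_Icc_val]
        omega
      have trans2 : ∀ j : Fin n, (dEven j ∈ Set.Icc a b ↔ j ∈ Set.Icc a' b') := by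
        intro j
        rw [dEven_mem_Icc, mem_Icc_val]
        omega
      refine ⟨a', b', ?_, ?_, ?_, ?_⟩
      · rw [Fin.le_def]; omega
      · rintro ⟨h1, h2⟩
        rw [e1] at h1; rw [e2] at h2
        exact hproper ⟨by omega, by omega⟩
      · apply isBlockUnion_of_invariant
        intro j
        rw [← trans1 j, ← trans2 (nextP π j)]
        exact (isBlockUnion_arch_iff π).1 hBπ j
      · apply isBlockUnion_of_invariant
        intro j
        rw [← trans1 j, ← trans2 (nextP ρ j)]
        exact (isBlockUnion_arch_iff ρ).1 hBρ j
    · -- type 2 : a odd, b even : the meet is nontrivial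
      right
      rw [inf_ne_bot_iff]
      have ha2 : a.val / 2 < n := by omega
      have hb2 : b.val / 2 < n := by omega
      set s : Fin n := ⟨a.val/2, ha2⟩ with hs
      set t : Fin n := ⟨b.val/2, hb2⟩ with ht
      have e1 : s.val = a.val / 2 := rfl
      have e2 : t.val = b.val / 2 := rfl
      have hbev : b.val % 2 = 0 := by omega
      have haval : a.val = 2 * s.val + 1 := by omega
      have hbval : b.val = 2 * t.val := by omega
      have hst : s < t := by rw [Fin.lt_def]; omega
      have trans1 : ∀ j : Fin n, (dOdd j ∈ Set.Icc a b ↔ (s ≤ j ∧ j < t)) := by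
        intro j
        rw [dOdd_mem_Icc, Fin.le_def, Fin.lt_def]
        omega
      have trans2 : ∀ j : Fin n, (dEven j ∈ Set.Icc a b ↔ (s < j ∧ j ≤ t)) := by
        intro j
        rw [dEven_mem_Icc, Fin.le_def, Fin.lt_def]
        omega
      have hclπ : ∀ j : Fin n, (s ≤ j ∧ j < t) ↔ (s < nextP π j ∧ nextP π j ≤ t) := by
        intro j
        rw [← trans1 j, ← trans2 (nextP π j)]
        exact (isBlockUnion_arch_iff π).1 hBπ j
      have hclρ : ∀ j : Fin n, (s ≤ j ∧ j < t) ↔ (s < nextP ρ j ∧ nextP ρ j ≤ t) := by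
        intro j
        rw [← trans1 j, ← trans2 (nextP ρ j)]
        exact (isBlockUnion_arch_iff ρ).1 hBρ j
      exact ⟨s, t, ne_of_lt hst, closure_to_rel hst hclπ, closure_to_rel hst hclρ⟩
  · rintro (h | h)
    · rw [ncJoin_ne_top_iff] at h
      obtain ⟨a', b', hab, hproper, hπb, hρb⟩ := h
      have habv : a'.val ≤ b'.val := hab
      have hb'lt := b'.isLt
      refine ⟨dEven a', dOdd b', ?_, ?_, ?_, ?_⟩
      · rw [Fin.le_def]; show 2*a'.val ≤ 2*b'.val+1; omega
      · rintro ⟨h1, h2⟩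
        have h1' : 2*a'.val = 0 := h1
        have h2' : 2*b'.val+1 = 2*n-1 := h2
        exact hproper ⟨by omega, by omega⟩
      · rw [isBlockUnion_arch_iff]
        intro j
        rw [dOdd_mem_Icc, dEven_mem_Icc]
        simp only [dEven, dOdd]
        constructor
        · intro hj
          have hjm : j ∈ Set.Icc a' b' := by rw [mem_Icc_val]; omega
          have := hπb j hjm _ (nextP_r π j)
          rw [mem_Icc_val] at this
          omega
        · intro hj
          have hjm : nextP π j ∈ Set.Icc a' b' := by rw [mem_Icc_val]; omega
          have := hπb _ hjm j (π.iseqv.symm (nextP_r π j))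
          rw [mem_Icc_val] at this
          omega
      · rw [isBlockUnion_arch_iff]
        intro j
        rw [dOdd_mem_Icc, dEven_mem_Icc]
        simp only [dEven, dOdd]
        constructor
        · intro hj
          have hjm : j ∈ Set.Icc a' b' := by rw [mem_Icc_val]; omega
          have := hρb j hjm _ (nextP_r ρ j)
          rw [mem_Icc_val] at this
          omega
        · intro hj
          have hjm : nextP ρ j ∈ Set.Icc a' b' := by rw [mem_Icc_val]; omega
          have := hρb _ hjm j (ρ.iseqv.symm (nextP_r ρ j))
          rw [mem_Icc_val] at this
          omega
    · rw [inf_ne_bot_iff] at h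
      obtain ⟨x, y, hne, h1, h2⟩ := h
      -- wlog x < y
      have key : ∀ x y : Fin n, x < y → π.r x y → ρ.r x y →
          ∃ a b : Fin (2*n), a ≤ b ∧ ¬(a.val = 0 ∧ b.val = 2*n - 1) ∧
            IsBlockUnion (archSetoid π) (Set.Icc a b) ∧
            IsBlockUnion (archSetoid ρ) (Set.Icc a b) := by
        intro x y hlt h1 h2
        have hyv := y.isLt
        refine ⟨dOdd x, dEven y, ?_, ?_, ?_, ?_⟩
        · rw [Fin.le_def]; show 2*x.val+1 ≤ 2*y.val
          have : x.val < y.val := hlt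
          omega
        · rintro ⟨hc, -⟩
          have hc' : (dOdd x).val = 0 := hc
          rw [show (dOdd x).val = 2*x.val+1 from rfl] at hc'
          omega
        · rw [isBlockUnion_arch_iff]
          intro j
          rw [dOdd_mem_Icc, dEven_mem_Icc]
          have hiff := meet_interval_closure hπ h1 hlt j
          rw [Fin.le_def, Fin.lt_def, Fin.lt_def, Fin.le_def] at hiff
          have ex : (dOdd x).val = 2*x.val+1 := rfl
          have ey : (dEven y).val = 2*y.val := rfl
          constructor
          · intro hj
            have hr := hiff.1 ⟨by omega, by omega⟩
            omega
          · intro hj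
            have hr := hiff.2 ⟨by omega, by omega⟩
            omega
        · rw [isBlockUnion_arch_iff]
          intro j
          rw [dOdd_mem_Icc, dEven_mem_Icc]
          have hiff := meet_interval_closure hρ h2 hlt j
          rw [Fin.le_def, Fin.lt_def, Fin.lt_def, Fin.le_def] at hiff
          have ex : (dOdd x).val = 2*x.val+1 := rfl
          have ey : (dEven y).val = 2*y.val := rfl
          constructor
          · intro hj
            have hr := hiff.1 ⟨by omega, by omega⟩
            omega
          · intro hj
            have hr := hiff.2 ⟨by omega, by omega⟩
            omega
      rcases lt_or_gt_of_ne hne with hlt | hlt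
      · exact key x y hlt h1 h2
      · exact key y x hlt (π.iseqv.symm h1) (ρ.iseqv.symm h2)

end assemble

lemma arch_join_top_iff {n : ℕ} {π ρ : Setoid (Fin n)} (hπ : IsNC π) (hρ : IsNC ρ) :
    ncJoin (archSetoid π) (archSetoid ρ) = ⊤ ↔ (ncJoin π ρ = ⊤ ∧ π ⊓ ρ = ⊥) := by
  have h := arch_join_ne_top_iff hπ hρ
  constructor
  · intro ht
    constructor
    · by_contra hc
      exact (h.2 (Or.inl hc)) ht
    · by_contra hc
      exact (h.2 (Or.inr hc)) ht
  · rintro ⟨h1, h2⟩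
    by_contra hc
    rcases h.1 hc with h' | h'
    · exact h' h1
    · exact h' h2

theorem card_pairings_join_top_eq_mirr' (n : ℕ) :
    Nat.card {pr : Setoid (Fin (2*n)) × Setoid (Fin (2*n)) //
        (IsNC pr.1 ∧ IsPairing pr.1) ∧ (IsNC pr.2 ∧ IsPairing pr.2) ∧
        ncJoin pr.1 pr.2 = ⊤}
      = Nat.card {pr : Setoid (Fin n) × Setoid (Fin n) //
        IsNC pr.1 ∧ IsNC pr.2 ∧ ncJoin pr.1 pr.2 = ⊤ ∧ pr.1 ⊓ pr.2 = ⊥} := by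
  symm
  apply Nat.card_eq_of_bijective
    (f := fun p => (⟨(archSetoid p.val.1, archSetoid p.val.2), by
      obtain ⟨h1, h2, h3, h4⟩ := p.property
      exact ⟨⟨arch_NC _ h1, arch_pairing _⟩, ⟨arch_NC _ h2, arch_pairing _⟩,
        (arch_join_top_iff h1 h2).2 ⟨h3, h4⟩⟩⟩ :
      {pr : Setoid (Fin (2*n)) × Setoid (Fin (2*n)) //
        (IsNC pr.1 ∧ IsPairing pr.1) ∧ (IsNC pr.2 ∧ IsPairing pr.2) ∧
        ncJoin pr.1 pr.2 = ⊤}))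
  constructor
  · rintro ⟨⟨π1, ρ1⟩, hp⟩ ⟨⟨π2, ρ2⟩, hq⟩ heq
    simp only [Subtype.mk.injEq, Prod.mk.injEq] at heq
    apply Subtype.ext
    simp only [Prod.mk.injEq]
    exact ⟨arch_injective _ heq.1, arch_injective _ heq.2⟩
  · rintro ⟨⟨σ, θ⟩, ⟨⟨hσNC, hσP⟩, ⟨hθNC, hθP⟩, hjoin⟩⟩
    have hπNC := isNC_sigOf hσP hσNC
    have hρNC := isNC_sigOf hθP hθNC
    have hσeq := arch_sigOf hσP hσNC
    have hθeq := arch_sigOf hθP hθNC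
    have hcond := (arch_join_top_iff hπNC hρNC).1 (by rw [hσeq, hθeq]; exact hjoin)
    refine ⟨⟨(sigOf hσP, sigOf hθP), hπNC, hρNC, hcond.1, hcond.2⟩, ?_⟩
    apply Subtype.ext
    simp only [Prod.mk.injEq]
    exact ⟨hσeq, hθeq⟩

end AuxProof

/-- The number of pairs `(σ,θ) ∈ NCP(2n)²` with `σ ∨ θ = 1_{2n}` (join in
`NC(2n)`) equals the number of irreducible meandric systems on `2n` bridges,
i.e. the number of pairs `(π,ρ) ∈ NC(n)²` with `π ∨ ρ = 1_n`, `π ∧ ρ = 0_n`. -/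
theorem card_pairings_join_top_eq_mirr (n : ℕ) :
    Nat.card {pr : Setoid (Fin (2*n)) × Setoid (Fin (2*n)) //
        (IsNC pr.1 ∧ IsPairing pr.1) ∧ (IsNC pr.2 ∧ IsPairing pr.2) ∧
        ncJoin pr.1 pr.2 = ⊤}
      = Nat.card {pr : Setoid (Fin n) × Setoid (Fin n) //
        IsNC pr.1 ∧ IsNC pr.2 ∧ ncJoin pr.1 pr.2 = ⊤ ∧ pr.1 ⊓ pr.2 = ⊥} := by
  exact card_pairings_join_top_eq_mirr' n
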